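/- Let Γ be a Bieberbach-type subgroup of the affine group of ℝⁿ with parameters (n, q), and assume additionally that u_γ ∈ (1/q)ℤⁿ for every γ ∈ Γ. Let s > 1 be an integer with s ≡ 1 (mod q), and let φ: Γ → Γ be a group homomorphism such that g_{φ(γ)} = g_γ for all γ ∈ Γ and φ sends the translation by m to the translation by s·m for every m ∈ ℤⁿ. Let A ∈ GLₙ(ℤ) with every entry of A − Id divisible by q, let x₀ ∈ ℝⁿ, and suppose the affine map L(x) = A x + x₀ normalizes Γ (i.e., L ∘ γ ∘ L⁻¹ ∈ Γ for all γ ∈ Γ) with g_{L∘γ∘L⁻¹} = g_γ for all γ ∈ Γ. Then there exist vectors v, w ∈ (1/q)ℤⁿ such that the affine maps E(x) := s·x + v and 𝔸(x) := A x + w satisfy E ∘ γ ∘ E⁻¹ = φ(γ) and 𝔸 ∘ γ ∘ 𝔸⁻¹ = L ∘ γ ∘ L⁻¹ for every γ ∈ Γ. -/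

import Mathlib

open Matrix

noncomputable section

abbrev Aff (n : ℕ) := (Fin n → ℝ) ≃ᵃ[ℝ] (Fin n → ℝ)

/-- `ℤⁿ` as a subset of `ℝⁿ`. -/
def intVec (n : ℕ) : Set (Fin n → ℝ) := {v | ∀ i, ∃ m : ℤ, v i = m}

/-- `(1/q)ℤⁿ` as a subset of `ℝⁿ`. -/
def qIntVec (n q : ℕ) : Set (Fin n → ℝ) := {v | ∀ i, ∃ m : ℤ, (q : ℝ) * v i = m}

/-- The translation part `u_γ` of an affine bijection. -/
def uPart {n : ℕ} (γ : Aff n) : Fin n → ℝ := γ 0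

/-- The linear part `g_γ` of an affine bijection. -/
def gPart {n : ℕ} (γ : Aff n) : (Fin n → ℝ) →ₗ[ℝ] (Fin n → ℝ) := γ.linear

/-- A linear map lies in `GLₙ(ℤ)` if it is given by an integer matrix invertible over `ℤ`. -/
def IsIntegralGL {n : ℕ} (f : (Fin n → ℝ) →ₗ[ℝ] (Fin n → ℝ)) : Prop :=
  ∃ M : Matrix (Fin n) (Fin n) ℤ, IsUnit M ∧ ∀ x, f x = (M.map (Int.cast : ℤ → ℝ)) *ᵥ x

/-- The subgroup of translations by integer vectors. -/
def intTranslations (n : ℕ) : Subgroup (Aff n) where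
  carrier := {γ | ∃ m ∈ intVec n, ∀ x, γ x = x + m}
  one_mem' := ⟨0, fun i => ⟨0, by simp⟩, fun x => by simp [AffineEquiv.one_def]⟩
  mul_mem' := by
    rintro a b ⟨ma, hma, ha⟩ ⟨mb, hmb, hb⟩
    refine ⟨mb + ma, fun i => ?_, fun x => ?_⟩
    · obtain ⟨p, hp⟩ := hma i; obtain ⟨r, hr⟩ := hmb i
      exact ⟨r + p, by simp [Pi.add_apply, hp, hr]⟩
    · simp [AffineEquiv.coe_mul, Function.comp, hb, ha, add_assoc]
  inv_mem' := by
    rintro a ⟨m, hm, ha⟩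
    refine ⟨-m, fun i => ?_, fun x => ?_⟩
    · obtain ⟨p, hp⟩ := hm i; exact ⟨-p, by simp [hp]⟩
    · have : a (x + -m) = x := by rw [ha]; abel
      calc a⁻¹ x = a⁻¹ (a (x + -m)) := by rw [this]
      _ = x + -m := by rw [AffineEquiv.inv_def, AffineEquiv.symm_apply_apply]

/-- A Bieberbach-type subgroup of the affine group of `ℝⁿ` with parameters `(n, q)`. -/
structure IsBieberbach {n : ℕ} (Γ : Subgroup (Aff n)) (q : ℕ) : Prop where
  /-- every element has linear part in `GLₙ(ℤ)` -/
  integral : ∀ γ ∈ Γ, IsIntegralGL (gPart γ)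
  /-- elements with identity linear part are integer translations -/
  trans_of_linear_id : ∀ γ ∈ Γ, γ.linear = LinearEquiv.refl ℝ (Fin n → ℝ) → γ ∈ intTranslations n
  /-- all integer translations belong to `Γ` -/
  trans_le : intTranslations n ≤ Γ
  /-- the integer translations have index `q` in `Γ` -/
  index_eq : ((intTranslations n).subgroupOf Γ).index = q


namespace FGAux

open Matrix

variable {n q : ℕ}

lemma aff_apply (a : Aff n) (y : Fin n → ℝ) : a y = gPart a y + uPart a := by
  have h := a.toAffineMap.linearMap_vsub y 0
  simp only [vsub_eq_sub, sub_zero, AffineEquiv.coe_toAffineMap,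
    AffineEquiv.linear_toAffineMap] at h
  unfold gPart uPart
  rw [h]; abel

lemma uPart_mul (a b : Aff n) : uPart (a * b) = gPart a (uPart b) + uPart a := by
  show a (b 0) = _
  rw [aff_apply a (b 0)]; rfl

lemma uPart_eq (m : Fin n → ℝ) (γ : Aff n) (h : ∀ x, γ x = x + m) : uPart γ = m := by
  rw [uPart, h, zero_add]

lemma intVec_add {a b : Fin n → ℝ} (ha : a ∈ intVec n) (hb : b ∈ intVec n) :
    a + b ∈ intVec n := fun i => by
  obtain ⟨p, hp⟩ := ha i; obtain ⟨r, hr⟩ := hb i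
  exact ⟨p + r, by simp [hp, hr]⟩

lemma intVec_sub {a b : Fin n → ℝ} (ha : a ∈ intVec n) (hb : b ∈ intVec n) :
    a - b ∈ intVec n := fun i => by
  obtain ⟨p, hp⟩ := ha i; obtain ⟨r, hr⟩ := hb i
  exact ⟨p - r, by simp [hp, hr]⟩

lemma intVec_zero : (0 : Fin n → ℝ) ∈ intVec n := fun i => ⟨0, by simp⟩

lemma intVec_mulVec {B : Matrix (Fin n) (Fin n) ℤ} (hB : ∀ i j, (q : ℤ) ∣ B i j)
    {u : Fin n → ℝ} (hu : u ∈ qIntVec n q) :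
    (B.map (Int.cast : ℤ → ℝ)) *ᵥ u ∈ intVec n := by
  choose c hc using hB
  choose r hr using hu
  intro i
  refine ⟨∑ j, c i j * r j, ?_⟩
  show ∑ j, (B.map (Int.cast : ℤ → ℝ)) i j * u j = _
  push_cast
  refine Finset.sum_congr rfl fun j _ => ?_
  have h1 : ((B i j : ℤ) : ℝ) = (q : ℝ) * (c i j : ℝ) := by
    have := hc i j; push_cast [this]; ring
  simp only [Matrix.map_apply]
  linear_combination (u j) * h1 + ((c i j : ℝ)) * (hr j)

/-- Two elements of `Γ` with equal linear parts differ by an integer translation. -/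
lemma udiff_int (Γ : Subgroup (Aff n)) (hΓ : IsBieberbach Γ q) {γ δ : Aff n}
    (hγ : γ ∈ Γ) (hδ : δ ∈ Γ) (hg : gPart δ = gPart γ) :
    uPart δ - uPart γ ∈ intVec n := by
  have hlineq : δ.linear = γ.linear :=
    LinearEquiv.ext fun x => DFunLike.congr_fun hg x
  have hmem : δ * γ⁻¹ ∈ Γ := mul_mem hδ (inv_mem hγ)
  have hlin : (δ * γ⁻¹).linear = LinearEquiv.refl ℝ (Fin n → ℝ) := by
    have h1 : (δ * γ⁻¹).linear = δ.linear * (γ.linear)⁻¹ := rfl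
    rw [h1, hlineq, mul_inv_cancel]; rfl
  obtain ⟨m, hm, hx⟩ := hΓ.trans_of_linear_id _ hmem hlin
  have h0 : δ 0 = γ 0 + m := by
    have h2 : (δ * γ⁻¹) (γ 0) = γ 0 + m := hx (γ 0)
    have h3 : (δ * γ⁻¹) (γ 0) = δ 0 := by
      show δ (γ⁻¹ (γ 0)) = δ 0
      rw [AffineEquiv.inv_def, AffineEquiv.symm_apply_apply]
    rw [← h3, h2]
  intro i
  obtain ⟨p, hp⟩ := hm i
  exact ⟨p, by simp [uPart, h0, hp]⟩

/-- Averaging an integer-valued cocycle vanishing on translations over the finite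
quotient produces a coboundary with vector in `(1/q)ℤⁿ`. -/
lemma cocycle_coboundary (hq : 0 < q) (Γ : Subgroup (Aff n))
    (hidx : ((intTranslations n).subgroupOf Γ).index = q)
    (Ψ : Γ → (Fin n → ℝ))
    (hco : ∀ γ δ : Γ, Ψ (γ * δ) = Ψ γ + gPart (γ : Aff n) (Ψ δ))
    (htr : ∀ γ : Γ, (γ : Aff n) ∈ intTranslations n → Ψ γ = 0)
    (hint : ∀ γ : Γ, Ψ γ ∈ intVec n) :
    ∃ v ∈ qIntVec n q, ∀ γ : Γ, Ψ γ = v - gPart (γ : Aff n) v := by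
  classical
  set H := (intTranslations n).subgroupOf Γ with hH
  haveI : H.FiniteIndex := ⟨by rw [hidx]; exact hq.ne'⟩
  haveI : Finite (Γ ⧸ H) := Subgroup.finite_quotient_of_finiteIndex
  haveI : Fintype (Γ ⧸ H) := Fintype.ofFinite _
  have hlift : ∀ a b : Γ, (QuotientGroup.leftRel H) a b → Ψ a = Ψ b := by
    intro a b hab
    rw [QuotientGroup.leftRel_apply] at hab
    have hb : b = a * (a⁻¹ * b) := by group
    have h0 : Ψ (a⁻¹ * b) = 0 := htr _ hab
    rw [hb, hco, h0, map_zero, add_zero]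
  let Ψb : Γ ⧸ H → (Fin n → ℝ) := Quotient.lift Ψ hlift
  have hmk : ∀ γ : Γ, Ψb (QuotientGroup.mk γ) = Ψ γ := fun _ => rfl
  set S := ∑ c : Γ ⧸ H, Ψb c with hS
  have hcard : Fintype.card (Γ ⧸ H) = q := by
    rw [← hidx, Subgroup.index, Nat.card_eq_fintype_card]
  have hsmul : ∀ (γ : Γ) (c : Γ ⧸ H), Ψb (γ • c) = Ψ γ + gPart (γ : Aff n) (Ψb c) := by
    intro γ c
    induction c using QuotientGroup.induction_on with
    | H δ => exact hco γ δ
  have hkey : ∀ γ : Γ, S = q • Ψ γ + gPart (γ : Aff n) S := by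
    intro γ
    calc S = ∑ c : Γ ⧸ H, Ψb (γ • c) := (Equiv.sum_comp (MulAction.toPerm γ) Ψb).symm
    _ = ∑ c : Γ ⧸ H, (Ψ γ + gPart (γ : Aff n) (Ψb c)) :=
        Finset.sum_congr rfl fun c _ => hsmul γ c
    _ = Fintype.card (Γ ⧸ H) • Ψ γ + gPart (γ : Aff n) S := by
        rw [Finset.sum_add_distrib, Finset.sum_const, Finset.card_univ, ← map_sum]
    _ = q • Ψ γ + gPart (γ : Aff n) S := by rw [hcard]
  have hSint : S ∈ intVec n := by
    refine Finset.sum_induction Ψb (· ∈ intVec n) (fun a b => intVec_add) intVec_zero ?_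
    intro c _
    induction c using QuotientGroup.induction_on with
    | H δ => exact hint δ
  have hqR : (q : ℝ) ≠ 0 := Nat.cast_ne_zero.2 hq.ne'
  refine ⟨(q : ℝ)⁻¹ • S, ?_, ?_⟩
  · intro i
    obtain ⟨m, hm⟩ := hSint i
    refine ⟨m, ?_⟩
    show (q : ℝ) * ((q : ℝ)⁻¹ * S i) = m
    rw [mul_inv_cancel_left₀ hqR, hm]
  · intro γ
    have h1 : S - gPart (γ : Aff n) S = q • Ψ γ := by
      nth_rewrite 1 [hkey γ]; abel
    rw [_root_.map_smul, ← smul_sub, h1, ← Nat.cast_smul_eq_nsmul ℝ, smul_smul,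
      inv_mul_cancel₀ hqR, one_smul]

end FGAux

open FGAux


/-- **Core of Proposition 3** (Farrell–Gogolev): let `Γ` be a Bieberbach-type subgroup
of the affine group of `ℝⁿ` with parameters `(n, q)`, with all translation parts in
`(1/q)ℤⁿ`. Let `s > 1` be an integer with `s ≡ 1 (mod q)`, and `φ : Γ → Γ` a
homomorphism fixing linear parts and sending the translation by `m ∈ ℤⁿ` to the
translation by `s·m`. Let `A ∈ GLₙ(ℤ)` with all entries of `A − Id` divisible by `q`,
`x₀ ∈ ℝⁿ`, and suppose `L(x) = A x + x₀` normalizes `Γ` with `g_{L∘γ∘L⁻¹} = g_γ`.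
Then there are `v, w ∈ (1/q)ℤⁿ` such that `E(x) := s•x + v` and `𝔸(x) := A x + w`
satisfy `E ∘ γ ∘ E⁻¹ = φ(γ)` and `𝔸 ∘ γ ∘ 𝔸⁻¹ = L ∘ γ ∘ L⁻¹` for all `γ ∈ Γ`
(stated equivalently as `φ(γ) ∘ E = E ∘ γ` and `(L∘γ∘L⁻¹) ∘ 𝔸 = 𝔸 ∘ γ`). -/
theorem exists_conformal_expanding_and_affine_Anosov
    {n q : ℕ} (hq : 0 < q) (Γ : Subgroup (Aff n)) (hΓ : IsBieberbach Γ q)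
    (hu : ∀ γ ∈ Γ, uPart γ ∈ qIntVec n q)
    (s : ℤ) (hs : 1 < s) (hs1 : s ≡ 1 [ZMOD (q : ℤ)])
    (φ : Γ →* Γ)
    (hφg : ∀ γ : Γ, gPart (φ γ : Aff n) = gPart (γ : Aff n))
    (hφt : ∀ (γ : Γ) (m : Fin n → ℝ), m ∈ intVec n → (∀ x, (γ : Aff n) x = x + m) →
        ∀ x, (φ γ : Aff n) x = x + (s : ℝ) • m)
    (A : Matrix (Fin n) (Fin n) ℤ) (hA : IsUnit A)
    (hAq : ∀ i j, (q : ℤ) ∣ (A - 1) i j)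
    (x₀ : Fin n → ℝ) (L : Aff n)
    (hL : ∀ x, L x = (A.map (Int.cast : ℤ → ℝ)) *ᵥ x + x₀)
    (hLmem : ∀ γ : Γ, (L * (γ : Aff n) * L⁻¹) ∈ Γ)
    (hLg : ∀ γ : Γ, gPart (L * (γ : Aff n) * L⁻¹) = gPart (γ : Aff n)) :
    ∃ v ∈ qIntVec n q, ∃ w ∈ qIntVec n q,
      (∀ (γ : Γ) (x : Fin n → ℝ),
        (φ γ : Aff n) ((s : ℝ) • x + v) = (s : ℝ) • (γ : Aff n) x + v) ∧
      (∀ (γ : Γ) (x : Fin n → ℝ),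
        (L * (γ : Aff n) * L⁻¹) ((A.map (Int.cast : ℤ → ℝ)) *ᵥ x + w)
          = (A.map (Int.cast : ℤ → ℝ)) *ᵥ ((γ : Aff n) x) + w) := by
  classical
  set Amap := A.map (Int.cast : ℤ → ℝ) with hAmap
  -- the linear part of L is given by the matrix A
  have hgL : ∀ x, gPart L x = Amap *ᵥ x := by
    intro x
    have h := L.toAffineMap.linearMap_vsub x 0
    simp only [vsub_eq_sub, sub_zero, AffineEquiv.coe_toAffineMap,
      AffineEquiv.linear_toAffineMap] at h
    show (L.linear : (Fin n → ℝ) →ₗ[ℝ] (Fin n → ℝ)) x = Amap *ᵥ x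
    rw [h, hL, hL]
    simp [Matrix.mulVec_zero]
  -- the matrix A commutes with the linear part of every γ ∈ Γ
  have hcomm : ∀ (γ : Γ) (x : Fin n → ℝ),
      gPart (γ : Aff n) (Amap *ᵥ x) = Amap *ᵥ (gPart (γ : Aff n) x) := by
    intro γ x
    have h2 := DFunLike.congr_fun (hLg γ) (gPart L x)
    have e1 : gPart (L * (γ : Aff n) * L⁻¹) (gPart L x)
        = gPart L (gPart (γ : Aff n) x) := by
      show L.linear ((γ : Aff n).linear (L.linear.symm (L.linear x)))
          = L.linear ((γ : Aff n).linear x)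
      rw [LinearEquiv.symm_apply_apply]
    rw [e1, hgL, hgL] at h2
    exact h2.symm
  -- the two cocycles
  set Ψ₁ : Γ → (Fin n → ℝ) := fun γ => uPart (φ γ : Aff n) - (s : ℝ) • uPart (γ : Aff n)
    with hΨ₁
  set Ψ₂ : Γ → (Fin n → ℝ) := fun γ => uPart (L * (γ : Aff n) * L⁻¹) - Amap *ᵥ uPart (γ : Aff n)
    with hΨ₂
  -- Ψ₁ is a cocycle
  have hco1 : ∀ γ δ : Γ, Ψ₁ (γ * δ) = Ψ₁ γ + gPart (γ : Aff n) (Ψ₁ δ) := by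
    intro γ δ
    have e1 : ((φ (γ * δ) : Γ) : Aff n) = (φ γ : Aff n) * (φ δ : Aff n) := by
      rw [_root_.map_mul]; rfl
    have e2 : ((γ * δ : Γ) : Aff n) = (γ : Aff n) * (δ : Aff n) := rfl
    simp only [hΨ₁]
    rw [e1, e2, uPart_mul, uPart_mul, hφg γ, _root_.map_sub, _root_.map_smul, smul_add]
    abel
  -- Ψ₁ vanishes on integer translations
  have htr1 : ∀ γ : Γ, (γ : Aff n) ∈ intTranslations n → Ψ₁ γ = 0 := by
    rintro γ ⟨m, hm, hx⟩
    have h1 : uPart (γ : Aff n) = m := uPart_eq m _ hx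
    have h2 : uPart (φ γ : Aff n) = (s : ℝ) • m := uPart_eq _ _ (hφt γ m hm hx)
    simp [hΨ₁, h1, h2]
  -- Ψ₁ takes integer values
  obtain ⟨k, hk⟩ : (q : ℤ) ∣ s - 1 := Int.ModEq.dvd hs1.symm
  have hint1 : ∀ γ : Γ, Ψ₁ γ ∈ intVec n := by
    intro γ
    have hd := udiff_int Γ hΓ γ.2 (φ γ).2 (hφg γ)
    intro i
    obtain ⟨p, hp⟩ := hd i
    obtain ⟨r, hr⟩ := hu γ γ.2 i
    simp only [Pi.sub_apply] at hp
    refine ⟨p - k * r, ?_⟩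
    have hsk : (s : ℝ) = (q : ℝ) * (k : ℝ) + 1 := by
      have h2 : s = (q : ℤ) * k + 1 := by omega
      exact_mod_cast h2
    simp only [hΨ₁, Pi.sub_apply, Pi.smul_apply, smul_eq_mul]
    push_cast
    linear_combination hp - (k : ℝ) * hr - (uPart (γ : Aff n) i) * hsk
  -- Ψ₂ is a cocycle
  have hco2 : ∀ γ δ : Γ, Ψ₂ (γ * δ) = Ψ₂ γ + gPart (γ : Aff n) (Ψ₂ δ) := by
    intro γ δ
    have e : L * ((γ * δ : Γ) : Aff n) * L⁻¹
        = (L * (γ : Aff n) * L⁻¹) * (L * (δ : Aff n) * L⁻¹) := by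
      have e2 : ((γ * δ : Γ) : Aff n) = (γ : Aff n) * (δ : Aff n) := rfl
      rw [e2]; group
    have e2 : ((γ * δ : Γ) : Aff n) = (γ : Aff n) * (δ : Aff n) := rfl
    simp only [hΨ₂]
    rw [e, uPart_mul (L * (γ : Aff n) * L⁻¹) (L * (δ : Aff n) * L⁻¹), hLg γ, e2,
      uPart_mul (γ : Aff n) (δ : Aff n), Matrix.mulVec_add, _root_.map_sub,
      ← hcomm γ (uPart (δ : Aff n))]
    abel
  -- Ψ₂ vanishes on integer translations
  have htr2 : ∀ γ : Γ, (γ : Aff n) ∈ intTranslations n → Ψ₂ γ = 0 := by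
    rintro γ ⟨m, hm, hx⟩
    have h1 : uPart (γ : Aff n) = m := uPart_eq m _ hx
    have h2 : uPart (L * (γ : Aff n) * L⁻¹) = Amap *ᵥ m := by
      show L ((γ : Aff n) (L⁻¹ 0)) = _
      rw [hx, hL, Matrix.mulVec_add]
      have h3 : Amap *ᵥ (L⁻¹ 0) + x₀ = L (L⁻¹ 0) := (hL _).symm
      have h4 : L (L⁻¹ 0) = 0 := by
        rw [AffineEquiv.inv_def, AffineEquiv.apply_symm_apply]
      calc Amap *ᵥ (L⁻¹ 0) + Amap *ᵥ m + x₀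
          = (Amap *ᵥ (L⁻¹ 0) + x₀) + Amap *ᵥ m := by abel
        _ = Amap *ᵥ m := by rw [h3, h4, zero_add]
    simp [hΨ₂, h1, h2]
  -- Ψ₂ takes integer values
  have hint2 : ∀ γ : Γ, Ψ₂ γ ∈ intVec n := by
    intro γ
    have hd := udiff_int Γ hΓ γ.2 (hLmem γ) (hLg γ)
    have h2 := intVec_mulVec (q := q) hAq (hu γ γ.2)
    have e : Ψ₂ γ = (uPart (L * (γ : Aff n) * L⁻¹) - uPart (γ : Aff n))
        - ((A - 1).map (Int.cast : ℤ → ℝ)) *ᵥ uPart (γ : Aff n) := by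
      have hm : ((A - 1).map (Int.cast : ℤ → ℝ)) = Amap - 1 := by
        ext i j
        by_cases hij : i = j <;>
          simp [Matrix.map_apply, Matrix.sub_apply, Matrix.one_apply, hAmap, hij]
      rw [hΨ₂, hm, Matrix.sub_mulVec, Matrix.one_mulVec]
      abel
    rw [e]
    exact intVec_sub hd h2
  -- average the cocycles
  obtain ⟨v, hv, hv2⟩ := cocycle_coboundary hq Γ hΓ.index_eq Ψ₁ hco1 htr1 hint1
  obtain ⟨w, hw, hw2⟩ := cocycle_coboundary hq Γ hΓ.index_eq Ψ₂ hco2 htr2 hint2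
  refine ⟨v, hv, w, hw, ?_, ?_⟩
  · intro γ x
    have h := hv2 γ
    simp only [hΨ₁] at h
    have h' : uPart (φ γ : Aff n)
        = (v - gPart (γ : Aff n) v) + (s : ℝ) • uPart (γ : Aff n) :=
      sub_eq_iff_eq_add.mp h
    rw [aff_apply ((φ γ : Γ) : Aff n), aff_apply (γ : Aff n), hφg γ, _root_.map_add, _root_.map_smul,
      h', smul_add]
    abel
  · intro γ x
    have h := hw2 γ
    simp only [hΨ₂] at h
    have h' : uPart (L * (γ : Aff n) * L⁻¹)
        = (w - gPart (γ : Aff n) w) + Amap *ᵥ uPart (γ : Aff n) :=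
      sub_eq_iff_eq_add.mp h
    rw [aff_apply (L * (γ : Aff n) * L⁻¹), aff_apply (γ : Aff n), hLg γ, _root_.map_add,
      hcomm γ x, h', Matrix.mulVec_add]
    abel
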